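/- arXiv:2302.03247 — 9 statements merged into one kernel-verified Lean document; each statement's English description precedes it below -/
import Mathlib

section
/- Let g be a continuous real-valued function on [0, ∞), let a > 0, h ≥ 0, and s0 ∈ ℝ with s0 ∉ {0, −1}. Define F : (0, ∞) → ℝ by F(P) = P^{-1} ∫₀^P g(√(p² + h²)) dp. Then ∫₀¹ g(√(a²(s + s0)² + h²)) ds = (1 + s0) · F(a·|1 + s0|) − s0 · F(a·|s0|). -/
/-- The terminal 1D evaluation step: the integral along a unit segment is expressed
through the level-1 primitive boundary function at the endpoints. -/
theorem stmt_4 (g : ℝ → ℝ) (hg : ContinuousOn g (Set.Ici 0))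
    (a h s0 : ℝ) (ha : 0 < a) (hh : 0 ≤ h) (hs0 : s0 ≠ 0) (hs0' : s0 ≠ -1)
    (F : ℝ → ℝ)
    (hF : F = fun P => (∫ p in (0:ℝ)..P, g (Real.sqrt (p ^ 2 + h ^ 2))) / P) :
    ∫ s in (0:ℝ)..1, g (Real.sqrt (a ^ 2 * (s + s0) ^ 2 + h ^ 2))
      = (1 + s0) * F (a * |1 + s0|) - s0 * F (a * |s0|) := by
  set G : ℝ → ℝ := fun p => g (Real.sqrt (p ^ 2 + h ^ 2)) with hG
  have hGc : Continuous G := by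
    apply hg.comp_continuous
    · exact (continuous_pow 2).add continuous_const |>.sqrt
    · intro x; exact Real.sqrt_nonneg _
  have hGeven : ∀ p : ℝ, G (-p) = G p := by
    intro p; simp [hG, neg_pow]
  -- key lemma: for x ≠ 0, ∫₀^{a x} G = a * (x * F (a * |x|))
  have key : ∀ x : ℝ, x ≠ 0 → (∫ p in (0:ℝ)..(a * x), G p) = a * (x * F (a * |x|)) := by
    intro x hx
    rcases lt_or_gt_of_ne hx with hneg | hpos
    · have habs : |x| = -x := abs_of_neg hneg
      have hflip : (∫ p in (0:ℝ)..(a * x), G p) = - ∫ p in (0:ℝ)..(a * |x|), G p := by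
        have := intervalIntegral.integral_comp_neg (a := (0:ℝ)) (b := a * x) G
        simp only [hGeven] at this
        rw [this, habs]
        rw [intervalIntegral.integral_symm]
        ring_nf
      rw [hflip, hF]
      have hax : a * |x| ≠ 0 := by positivity
      field_simp [habs]
      rw [habs]; ring
    · have habs : |x| = x := abs_of_pos hpos
      rw [hF, habs]
      have hax : a * x ≠ 0 := by positivity
      field_simp
  -- substitution in the LHS
  have hsub : (∫ s in (0:ℝ)..1, g (Real.sqrt (a ^ 2 * (s + s0) ^ 2 + h ^ 2)))
      = a⁻¹ * ∫ p in (a * s0)..(a * 1 + a * s0), G p := by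
    have : ∀ s : ℝ, g (Real.sqrt (a ^ 2 * (s + s0) ^ 2 + h ^ 2)) = G (a * s + a * s0) := by
      intro s; simp only [hG]; ring_nf
    simp only [this]
    rw [intervalIntegral.integral_comp_mul_add G (ne_of_gt ha) (a * s0)]
    simp
  rw [hsub]
  have hint : ∀ u v : ℝ, IntervalIntegrable G MeasureTheory.volume u v :=
    fun u v => hGc.intervalIntegrable u v
  have hsplit : (∫ p in (a * s0)..(a * 1 + a * s0), G p)
      = (∫ p in (0:ℝ)..(a * (1 + s0)), G p) - ∫ p in (0:ℝ)..(a * s0), G p := by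
    rw [intervalIntegral.integral_interval_sub_left (hint 0 (a * (1 + s0))) (hint 0 (a * s0))]
    congr 1; ring
  rw [hsplit, key (1 + s0) (by intro hc; apply hs0'; linarith), key s0 hs0]
  field_simp
end

section
/- For all real numbers h > 0 and P > 0, ∫₀^P [ (p² − 2h²)·√(p² + h²) + 2h³ ] / p² dp = (1/2) · [ P·√(P² + h²) − 3h² · ln( (P + √(P² + h²)) / h ) + 4h² · (√(P² + h²) − h) / P ]. -/
/-- Level-3 PBF integral (cases #6, #7):
∫₀^P [(p²−2h²)√(p²+h²)+2h³]/p² dp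
  = (1/2)[P√(P²+h²) − 3h² ln((P+√(P²+h²))/h) + 4h²(√(P²+h²)−h)/P]. -/
theorem stmt_7 (h P : ℝ) (hh : 0 < h) (hP : 0 < P) :
    ∫ p in (0:ℝ)..P, ((p ^ 2 - 2 * h ^ 2) * Real.sqrt (p ^ 2 + h ^ 2) + 2 * h ^ 3) / p ^ 2
      = (1 / 2) * (P * Real.sqrt (P ^ 2 + h ^ 2)
          - 3 * h ^ 2 * Real.log ((P + Real.sqrt (P ^ 2 + h ^ 2)) / h)
          + 4 * h ^ 2 * (Real.sqrt (P ^ 2 + h ^ 2) - h) / P) := by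
  set s : ℝ → ℝ := fun p => Real.sqrt (p ^ 2 + h ^ 2) with hs
  have hs0 : ∀ p : ℝ, (0:ℝ) < p ^ 2 + h ^ 2 := fun p => by positivity
  have hspos : ∀ p : ℝ, 0 < s p := fun p => Real.sqrt_pos.mpr (hs0 p)
  have hs2 : ∀ p : ℝ, s p ^ 2 = p ^ 2 + h ^ 2 := fun p => Real.sq_sqrt (hs0 p).le
  have habs : ∀ p : ℝ, |p| < s p := fun p => by
    rw [hs, ← Real.sqrt_sq_eq_abs]
    exact Real.sqrt_lt_sqrt (sq_nonneg p) (by nlinarith)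
  have hps : ∀ p : ℝ, 0 < p + s p := fun p => by
    have := habs p; have := neg_abs_le p; linarith
  set g : ℝ → ℝ := fun p => (p ^ 2 - h ^ 2 + h * s p) / (s p + h) with hg
  set F : ℝ → ℝ := fun p =>
    (1/2) * (p * s p - 3 * h ^ 2 * Real.log ((p + s p) / h)) + 2 * h ^ 2 * p / (s p + h)
    with hF
  have hsd : ∀ p : ℝ, HasDerivAt s (p / s p) p := by
    intro p
    have h1 : HasDerivAt (fun p : ℝ => p ^ 2 + h ^ 2) (2 * p) p := by
      simpa using (hasDerivAt_pow 2 p).add_const (h ^ 2)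
    have := (Real.hasDerivAt_sqrt (hs0 p).ne').comp p h1
    refine this.congr_deriv ?_
    field_simp [hspos p |>.ne']
    ring
  have hFd : ∀ p : ℝ, HasDerivAt F (g p) p := by
    intro p
    have hsne : s p ≠ 0 := (hspos p).ne'
    have hshne : s p + h ≠ 0 := by positivity
    have h1 : HasDerivAt (fun p => p * s p) (1 * s p + p * (p / s p)) p :=
      (hasDerivAt_id p).mul (hsd p)
    have h2 : HasDerivAt (fun p => (p + s p) / h) ((1 + p / s p) / h) p :=
      (((hasDerivAt_id p).add (hsd p)).div_const h)
    have harg : (p + s p) / h ≠ 0 := (div_pos (hps p) hh).ne'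
    have h3 : HasDerivAt (fun p => Real.log ((p + s p) / h))
        (((1 + p / s p) / h) / ((p + s p) / h)) p := h2.log harg
    have h4 : HasDerivAt (fun p => 2 * h ^ 2 * p) (2 * h ^ 2) p := by
      simpa using (hasDerivAt_id p).const_mul (2 * h ^ 2)
    have h5 : HasDerivAt (fun p => s p + h) (p / s p) p := (hsd p).add_const h
    have h6 : HasDerivAt (fun p => 2 * h ^ 2 * p / (s p + h))
        ((2 * h ^ 2 * (s p + h) - 2 * h ^ 2 * p * (p / s p)) / (s p + h) ^ 2) p :=
      h4.div h5 hshne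
    have hD : HasDerivAt F
        ((1/2) * ((1 * s p + p * (p / s p)) - 3 * h ^ 2 * (((1 + p / s p) / h) / ((p + s p) / h)))
          + (2 * h ^ 2 * (s p + h) - 2 * h ^ 2 * p * (p / s p)) / (s p + h) ^ 2) p :=
      ((h1.sub (h3.const_mul (3 * h ^ 2))).const_mul (1/2)).add h6
    convert hD using 1
    rw [hg]
    have hpsne : p + s p ≠ 0 := (hps p).ne'
    have ht := hs2 p
    set t := s p with hts
    have e1 : (1 + p / t) / h / ((p + t) / h) = 1 / t := by
      field_simp; ring
    rw [e1]
    simp only [← hts]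
    field_simp
    linear_combination (-(t ^ 2 + 3 * h ^ 2)) * ht
  have hgc : Continuous g := by
    apply Continuous.div
    · continuity
    · continuity
    · intro x
      have := hspos x
      positivity
  have hcongr : ∀ p ∈ Set.uIcc (0:ℝ) P,
      ((p ^ 2 - 2 * h ^ 2) * Real.sqrt (p ^ 2 + h ^ 2) + 2 * h ^ 3) / p ^ 2 = g p := by
    intro p hp
    rw [Set.uIcc_of_le hP.le] at hp
    have ht := hs2 p
    rcases eq_or_lt_of_le hp.1 with h0 | h0
    · subst h0
      have : s 0 = h := by
        rw [hs]; simp [Real.sqrt_sq hh.le]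
      rw [hg]
      simp [this]
      ring_nf
    · have hpne : p ≠ 0 := h0.ne'
      have hsne : s p ≠ 0 := (hspos p).ne'
      have hshne : s p + h ≠ 0 := by have := hspos p; positivity
      rw [hg]
      rw [div_eq_div_iff (by positivity) (by positivity)]
      linear_combination (p ^ 2 - 2 * h ^ 2) * ht
  have hint : (∫ p in (0:ℝ)..P,
      ((p ^ 2 - 2 * h ^ 2) * Real.sqrt (p ^ 2 + h ^ 2) + 2 * h ^ 3) / p ^ 2)
      = ∫ p in (0:ℝ)..P, g p := intervalIntegral.integral_congr hcongr
  rw [hint, intervalIntegral.integral_eq_sub_of_hasDerivAt (fun p _ => hFd p)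
    (hgc.intervalIntegrable 0 P)]
  have hF0 : F 0 = 0 := by
    have h0 : s 0 = h := by rw [hs]; simp [Real.sqrt_sq hh.le]
    rw [hF]
    simp [h0, div_self hh.ne']
  rw [hF0, sub_zero, hF]
  have ht := hs2 P
  have hsne : s P ≠ 0 := (hspos P).ne'
  have hshne : s P + h ≠ 0 := by have := hspos P; positivity
  simp only
  rw [show Real.sqrt (P ^ 2 + h ^ 2) = s P from rfl]
  field_simp
  ring_nf
  nlinarith [ht, hspos P]
end

section
/- For all real numbers h > 0 and P > 0, writing R(p) = √(p² + h²), ∫₀^P [ R(p)/p − (h²/p²) · ln( (p + R(p)) / h ) ] dp = √(P² + h²) − 2h + (h²/P) · ln( (P + √(P² + h²)) / h ). -/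
open Real Set MeasureTheory intervalIntegral Filter

lemma hasDerivAt_R (h : ℝ) (hh : 0 < h) (p : ℝ) :
    HasDerivAt (fun q => Real.sqrt (q^2 + h^2)) (p / Real.sqrt (p^2 + h^2)) p := by
  have h0 : (0:ℝ) < p^2 + h^2 := by positivity
  have hs : Real.sqrt (p^2+h^2) ≠ 0 := by positivity
  have := (((hasDerivAt_pow 2 p).add_const (h^2)).sqrt h0.ne')
  convert this using 1
  field_simp
  ring

lemma hasDerivAt_L (h : ℝ) (hh : 0 < h) (p : ℝ) (hp : 0 ≤ p) :
    HasDerivAt (fun q => Real.log ((q + Real.sqrt (q^2 + h^2))/h))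
      (1 / Real.sqrt (p^2 + h^2)) p := by
  have h0 : (0:ℝ) < p^2 + h^2 := by positivity
  have hr0 : 0 < Real.sqrt (p^2+h^2) := Real.sqrt_pos.2 h0
  have hr2 : Real.sqrt (p^2+h^2)^2 = p^2+h^2 := Real.sq_sqrt h0.le
  have hpr : 0 < p + Real.sqrt (p^2+h^2) := by positivity
  have hu : HasDerivAt (fun q => (q + Real.sqrt (q^2 + h^2))/h)
      ((1 + p / Real.sqrt (p^2+h^2))/h) p :=
    ((hasDerivAt_id p).add (hasDerivAt_R h hh p)).div_const h
  have := hu.log (by positivity)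
  convert this using 1
  field_simp
  ring

/-- Level-2 PBF integral (case #4):
∫₀^P [R(p)/p − (h²/p²) ln((p+R(p))/h)] dp = √(P²+h²) − 2h + (h²/P) ln((P+√(P²+h²))/h),
where R(p) = √(p²+h²). -/
theorem stmt_8 (h P : ℝ) (hh : 0 < h) (hP : 0 < P) :
    ∫ p in (0:ℝ)..P,
        (Real.sqrt (p ^ 2 + h ^ 2) / p
          - (h ^ 2 / p ^ 2) * Real.log ((p + Real.sqrt (p ^ 2 + h ^ 2)) / h))
      = Real.sqrt (P ^ 2 + h ^ 2) - 2 * h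
          + (h ^ 2 / P) * Real.log ((P + Real.sqrt (P ^ 2 + h ^ 2)) / h) := by
  set f : ℝ → ℝ := fun p => Real.sqrt (p ^ 2 + h ^ 2) / p
          - (h ^ 2 / p ^ 2) * Real.log ((p + Real.sqrt (p ^ 2 + h ^ 2)) / h) with hf
  set F : ℝ → ℝ := fun p => Real.sqrt (p ^ 2 + h ^ 2)
          + (h ^ 2 / p) * Real.log ((p + Real.sqrt (p ^ 2 + h ^ 2)) / h) with hF
  -- pointwise bound
  have hbound : ∀ p : ℝ, 0 < p → |f p| ≤ 1 := by
    intro p hp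
    have h0 : (0:ℝ) < p^2 + h^2 := by positivity
    set r := Real.sqrt (p^2+h^2) with hr
    have hr2 : r^2 = p^2 + h^2 := Real.sq_sqrt h0.le
    have hr0 : 0 < r := Real.sqrt_pos.2 h0
    have hhr : h ≤ r := by nlinarith [hr2, hr0, sq_nonneg p]
    have hx : (0:ℝ) < (p + r)/h := by positivity
    set L := Real.log ((p + r)/h) with hL
    have hLub : L ≤ (p + r)/h - 1 := Real.log_le_sub_one_of_pos hx
    have hLlb : 1 - h/(p+r) ≤ L := by
      have := Real.one_sub_inv_le_log_of_pos hx
      rwa [inv_div] at this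
    have hfp : f p = r/p - (h^2/p^2) * L := rfl
    rw [abs_le, hfp]
    have hq1 := mul_le_mul_of_nonneg_left hLub (by positivity : (0:ℝ) ≤ h^2/p^2)
    have hq2 := mul_le_mul_of_nonneg_left hLlb (by positivity : (0:ℝ) ≤ h^2/p^2)
    constructor
    · have e2 : r/p - (h^2/p^2)*((p+r)/h - 1) = (r*p - h*p - h*r + h^2)/p^2 := by
        field_simp
        ring
      have : (-1:ℝ) ≤ (r*p - h*p - h*r + h^2)/p^2 := by
        rw [le_div_iff₀ (by positivity : (0:ℝ) < p^2)]
        nlinarith [mul_nonneg (sub_nonneg.2 hhr) (add_pos hp hr0).le, hr2]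
      linarith [e2 ▸ this]
    · have e1 : r/p - (h^2/p^2)*(1 - h/(p+r))
          = (r*p*(p+r) - h^2*(p+r) + h^3) / (p^2*(p+r)) := by
        field_simp
        ring
      have : (r*p*(p+r) - h^2*(p+r) + h^3) / (p^2*(p+r)) ≤ 1 := by
        rw [div_le_one (by positivity : (0:ℝ) < p^2*(p+r))]
        nlinarith [mul_nonneg (sq_nonneg h) (sub_nonneg.2 hhr), hr2]
      linarith [e1 ▸ this]
  -- measurability
  have m1 : Measurable fun p : ℝ => Real.sqrt (p^2+h^2) :=
    Real.continuous_sqrt.measurable.comp (by fun_prop)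
  have hmeas : Measurable f := by
    rw [hf]
    exact (m1.div measurable_id).sub ((measurable_const.div (by fun_prop)).mul
      (Real.measurable_log.comp ((measurable_id.add m1).div_const h)))
  -- integrability
  have hint : IntervalIntegrable f volume 0 P := by
    rw [intervalIntegrable_iff_integrableOn_Ioc_of_le hP.le]
    refine Integrable.mono' (integrable_const 1) hmeas.aestronglyMeasurable.restrict ?_
    rw [ae_restrict_iff' measurableSet_Ioc]
    exact Filter.Eventually.of_forall fun p hp => by
      simpa [Real.norm_eq_abs] using hbound p hp.1
  -- derivative
  have hFd : ∀ p : ℝ, 0 < p → HasDerivAt F (f p) p := by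
    intro p hp0
    have h0 : (0:ℝ) < p^2+h^2 := by positivity
    have hr0 : 0 < Real.sqrt (p^2+h^2) := Real.sqrt_pos.2 h0
    have hr2 : Real.sqrt (p^2+h^2)^2 = p^2+h^2 := Real.sq_sqrt h0.le
    have hc : HasDerivAt (fun q : ℝ => h^2/q) (-(h^2)/p^2) p := by
      have := (hasDerivAt_inv hp0.ne').const_mul (h^2)
      simpa [div_eq_mul_inv, neg_div, mul_comm, mul_assoc, mul_left_comm] using this
    have hprod := hc.mul (hasDerivAt_L h hh p hp0.le)
    have hsum := (hasDerivAt_R h hh p).add hprod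
    convert hsum using 1
    case e'_4 => rfl
    case e'_5 => rfl
    case e'_8 => rfl
    set r := Real.sqrt (p^2+h^2)
    set L := Real.log ((p + r)/h)
    rw [hf]
    have key : p/r + h^2/p*(1/r) = r/p := by
      field_simp
      linear_combination (-1)*hr2
    linear_combination -key
  -- limit at 0+
  have ha : Tendsto F (nhdsWithin 0 (Ioi 0)) (nhds (2*h)) := by
    have hL0 : HasDerivAt (fun q => Real.log ((q + Real.sqrt (q^2 + h^2))/h)) (1/h) 0 := by
      have := hasDerivAt_L h hh 0 le_rfl
      rwa [show (0:ℝ)^2 + h^2 = h^2 by ring, Real.sqrt_sq hh.le] at this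
    rw [hasDerivAt_iff_tendsto_slope] at hL0
    have hslope : Tendsto (fun q => Real.log ((q + Real.sqrt (q^2 + h^2))/h) / q)
        (nhdsWithin 0 (Ioi 0)) (nhds (1/h)) := by
      have h1 : Tendsto (slope (fun q => Real.log ((q + Real.sqrt (q^2 + h^2))/h)) 0)
          (nhdsWithin 0 (Ioi 0)) (nhds (1/h)) :=
        hL0.mono_left (nhdsWithin_mono _ (fun x hx => ne_of_gt hx))
      refine h1.congr fun q => ?_
      have h00 : Real.log ((0 + Real.sqrt ((0:ℝ)^2 + h^2))/h) = 0 := by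
        rw [show (0:ℝ)^2 + h^2 = h^2 by ring, Real.sqrt_sq hh.le]
        simp [div_self hh.ne']
      rw [slope_def_field, h00]
      simp
    have hRt : Tendsto (fun q => Real.sqrt (q^2 + h^2)) (nhdsWithin 0 (Ioi 0)) (nhds h) := by
      have : ContinuousAt (fun q : ℝ => Real.sqrt (q^2 + h^2)) 0 :=
        (hasDerivAt_R h hh 0).continuousAt
      have h2 : Tendsto (fun q : ℝ => Real.sqrt (q^2+h^2)) (nhdsWithin 0 (Ioi 0))
          (nhds (Real.sqrt ((0:ℝ)^2 + h^2))) := this.tendsto.mono_left nhdsWithin_le_nhds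
      rwa [show (0:ℝ)^2 + h^2 = h^2 by ring, Real.sqrt_sq hh.le] at h2
    have := hRt.add ((tendsto_const_nhds (x := h^2)).mul hslope)
    have heq : h + h^2 * (1/h) = 2*h := by field_simp; ring
    rw [heq] at this
    refine this.congr fun q => ?_
    simp only [hF]
    rw [div_mul_eq_mul_div, mul_div_assoc]
  -- limit at P-
  have hb : Tendsto F (nhdsWithin P (Iio P)) (nhds (F P)) :=
    ((hFd P hP).continuousAt.tendsto).mono_left nhdsWithin_le_nhds
  have := intervalIntegral.integral_eq_sub_of_hasDerivAt_of_tendsto hP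
    (fun x hx => hFd x hx.1) hint ha hb
  rw [this, hF]
  ring
end

section
/- For all real numbers h > 0 and P > 0, writing R(p) = √(p² + h²), ∫₀^P [ R(p)/p − (3h²/p²) · ln( (p + R(p)) / h ) + 4h² · (R(p) − h)/p³ ] dp = √(P² + h²) − 3h + (3h²/P) · ln( (P + √(P² + h²)) / h ) − 2h² · (√(P² + h²) − h)/P². -/
open Real Filter Set Topology intervalIntegral

lemma sqrtDeriv (b x : ℝ) (hb : 0 < b) :
    HasDerivAt (fun p => Real.sqrt (p^2+b^2)) (x / Real.sqrt (x^2+b^2)) x := by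
  have h1 : (0:ℝ) < x^2 + b^2 := by positivity
  have hr : 0 < Real.sqrt (x^2+b^2) := Real.sqrt_pos.mpr h1
  have := (Real.hasDerivAt_sqrt h1.ne').comp x ((hasDerivAt_pow 2 x).add_const (b^2))
  refine this.congr_deriv ?_
  symm
  field_simp
  ring

lemma logDeriv' (b x : ℝ) (hb : 0 < b) :
    HasDerivAt (fun p => Real.log ((p + Real.sqrt (p^2+b^2))/b)) (1 / Real.sqrt (x^2+b^2)) x := by
  have h1 : (0:ℝ) < x^2 + b^2 := by positivity
  have hr : 0 < Real.sqrt (x^2+b^2) := Real.sqrt_pos.mpr h1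
  have hr2 : Real.sqrt (x^2+b^2) ^ 2 = x^2+b^2 := Real.sq_sqrt h1.le
  have hxr : 0 < x + Real.sqrt (x^2+b^2) := by
    have h2 : |x| < Real.sqrt (x^2+b^2) := by
      rw [← Real.sqrt_sq_eq_abs]
      exact Real.sqrt_lt_sqrt (by positivity) (by nlinarith)
    nlinarith [neg_abs_le x]
  have hv : HasDerivAt (fun p => (p + Real.sqrt (p^2+b^2))/b) ((1 + x / Real.sqrt (x^2+b^2))/b) x :=
    ((hasDerivAt_id x).add (sqrtDeriv b x hb)).div_const b
  have := (Real.hasDerivAt_log (ne_of_gt (div_pos hxr hb))).comp x hv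
  refine this.congr_deriv ?_
  symm
  field_simp
  ring

lemma FDeriv (b x : ℝ) (hb : 0 < b) (hx : 0 < x) :
    HasDerivAt (fun p => Real.sqrt (p^2+b^2) + 3*b^2/p * Real.log ((p + Real.sqrt (p^2+b^2))/b)
        - 2*b^2*(Real.sqrt (p^2+b^2)-b)/p^2)
      (Real.sqrt (x ^ 2 + b ^ 2) / x
        - (3 * b ^ 2 / x ^ 2) * Real.log ((x + Real.sqrt (x ^ 2 + b ^ 2)) / b)
        + 4 * b ^ 2 * (Real.sqrt (x ^ 2 + b ^ 2) - b) / x ^ 3) x := by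
  have h1 : (0:ℝ) < x^2 + b^2 := by positivity
  have hr : 0 < Real.sqrt (x^2+b^2) := Real.sqrt_pos.mpr h1
  have hr2 : Real.sqrt (x^2+b^2) ^ 2 = x^2+b^2 := Real.sq_sqrt h1.le
  have hA := sqrtDeriv b x hb
  have hL := logDeriv' b x hb
  have hc : HasDerivAt (fun p : ℝ => 3*b^2/p) (-(3*b^2)/x^2) x := by
    have := (hasDerivAt_inv hx.ne').const_mul (3*b^2)
    simpa [div_eq_mul_inv, mul_comm] using this
  have hB := hc.mul hL
  have hnum : HasDerivAt (fun p => 2*b^2*(Real.sqrt (p^2+b^2)-b)) (2*b^2*(x/Real.sqrt (x^2+b^2))) x :=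
    (hA.sub_const b).const_mul (2*b^2)
  have hden : HasDerivAt (fun p : ℝ => p^2) (2*x) x := by
    simpa using hasDerivAt_pow 2 x
  have hC := hnum.div hden (by positivity)
  have := (hA.add hB).sub hC
  refine this.congr_deriv ?_
  symm
  field_simp
  linear_combination (x^2) * hr2

lemma tendM (b P : ℝ) (hb : 0 < b) (hP : 0 < P) :
    Tendsto (fun p => (p * Real.sqrt (p^2+b^2) - b^2 * Real.log ((p + Real.sqrt (p^2+b^2))/b)) / p^2)
      (𝓝[>] 0) (𝓝 0) := by
  apply HasDerivAt.lhopital_zero_right_on_Ioo (a := 0) (b := P)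
    (f' := fun p => 2*p^2 / Real.sqrt (p^2+b^2)) (g' := fun p => 2*p) hP
  · intro x hx
    have h1 : (0:ℝ) < x^2 + b^2 := by positivity
    have hr : 0 < Real.sqrt (x^2+b^2) := Real.sqrt_pos.mpr h1
    have hr2 : Real.sqrt (x^2+b^2) ^ 2 = x^2+b^2 := Real.sq_sqrt h1.le
    have := ((hasDerivAt_id x).mul (sqrtDeriv b x hb)).sub ((logDeriv' b x hb).const_mul (b^2))
    refine this.congr_deriv ?_
    symm
    field_simp
    ring_nf
    simp only [id_eq, hr2]
    ring
  · intro x hx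
    simpa using hasDerivAt_pow 2 x
  · intro x hx
    have := hx.1; positivity
  · have hc := ((hasDerivAt_id 0).mul (sqrtDeriv b 0 hb)).sub
      ((logDeriv' b 0 hb).const_mul (b^2))
    have := hc.continuousAt.tendsto.mono_left (nhdsWithin_le_nhds (s := Ioi (0:ℝ)))
    simpa [Real.sqrt_sq hb.le, div_self hb.ne', Pi.mul_def, Pi.sub_def, Pi.add_def] using this
  · have := ((continuous_pow 2).tendsto (0:ℝ)).mono_left (nhdsWithin_le_nhds (s := Ioi (0:ℝ)))
    simpa using this
  · have hcont : Tendsto (fun x : ℝ => x / Real.sqrt (x^2+b^2)) (𝓝[>] 0) (𝓝 0) := by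
      have h0 : Real.sqrt ((0:ℝ)^2+b^2) ≠ 0 := by
        simp [Real.sqrt_eq_zero']; positivity
      have := (continuousAt_id.div (sqrtDeriv b 0 hb).continuousAt h0).tendsto.mono_left
        (nhdsWithin_le_nhds (s := Ioi (0:ℝ)))
      simpa [Pi.div_def] using this
    apply hcont.congr'
    filter_upwards [self_mem_nhdsWithin] with x (hx : 0 < x)
    have hr : 0 < Real.sqrt (x^2+b^2) := Real.sqrt_pos.mpr (by positivity)
    field_simp

lemma tendg0 (b P : ℝ) (hb : 0 < b) (hP : 0 < P) :
    Tendsto (fun p =>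
        Real.sqrt (p ^ 2 + b ^ 2) / p
          - (3 * b ^ 2 / p ^ 2) * Real.log ((p + Real.sqrt (p ^ 2 + b ^ 2)) / b)
          + 4 * b ^ 2 * (Real.sqrt (p ^ 2 + b ^ 2) - b) / p ^ 3)
      (𝓝[>] 0) (𝓝 0) := by
  have hmain : Tendsto (fun p =>
      (p^2 * Real.sqrt (p^2+b^2) - 3*b^2*p*Real.log ((p + Real.sqrt (p^2+b^2))/b)
        + 4*b^2*(Real.sqrt (p^2+b^2) - b)) / p^3) (𝓝[>] 0) (𝓝 0) := by
    apply HasDerivAt.lhopital_zero_right_on_Ioo (a := 0) (b := P)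
      (f' := fun p => 3*(p * Real.sqrt (p^2+b^2) - b^2 * Real.log ((p + Real.sqrt (p^2+b^2))/b)))
      (g' := fun p => 3*p^2) hP
    · intro x hx
      have h1 : (0:ℝ) < x^2 + b^2 := by positivity
      have hr : 0 < Real.sqrt (x^2+b^2) := Real.sqrt_pos.mpr h1
      have hr2 : Real.sqrt (x^2+b^2) ^ 2 = x^2+b^2 := Real.sq_sqrt h1.le
      have hd1 := (hasDerivAt_pow 2 x).mul (sqrtDeriv b x hb)
      have hd2 := (((hasDerivAt_id x).const_mul (3*b^2)).mul (logDeriv' b x hb))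
      have hd3 := ((sqrtDeriv b x hb).sub_const b).const_mul (4*b^2)
      have := (hd1.sub hd2).add hd3
      refine this.congr_deriv ?_
      symm
      field_simp
      ring_nf
      simp only [id_eq]
      linear_combination x * hr2
    · intro x hx
      simpa using hasDerivAt_pow 3 x
    · intro x hx
      have := hx.1; positivity
    · have hd1 := (hasDerivAt_pow 2 (0:ℝ)).mul (sqrtDeriv b 0 hb)
      have hd2 := (((hasDerivAt_id (0:ℝ)).const_mul (3*b^2)).mul (logDeriv' b 0 hb))
      have hd3 := ((sqrtDeriv b 0 hb).sub_const b).const_mul (4*b^2)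
      have := ((hd1.sub hd2).add hd3).continuousAt.tendsto.mono_left
        (nhdsWithin_le_nhds (s := Ioi (0:ℝ)))
      simpa [Real.sqrt_sq hb.le, div_self hb.ne', Pi.mul_def, Pi.sub_def, Pi.add_def] using this
    · have := ((continuous_pow 3).tendsto (0:ℝ)).mono_left (nhdsWithin_le_nhds (s := Ioi (0:ℝ)))
      simpa using this
    · have := tendM b P hb hP
      apply this.congr'
      filter_upwards [self_mem_nhdsWithin] with x (hx : 0 < x)
      field_simp
  apply hmain.congr'
  filter_upwards [self_mem_nhdsWithin] with x (hx : 0 < x)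
  have hr : 0 < Real.sqrt (x^2+b^2) := Real.sqrt_pos.mpr (by positivity)
  field_simp

lemma tendF0 (b : ℝ) (hb : 0 < b) :
    Tendsto (fun p => Real.sqrt (p^2+b^2) + 3*b^2/p * Real.log ((p + Real.sqrt (p^2+b^2))/b)
        - 2*b^2*(Real.sqrt (p^2+b^2)-b)/p^2) (𝓝[>] 0) (𝓝 (3*b)) := by
  have hA : Tendsto (fun p : ℝ => Real.sqrt (p^2+b^2)) (𝓝[>] 0) (𝓝 b) := by
    have := (sqrtDeriv b 0 hb).continuousAt.tendsto.mono_left (nhdsWithin_le_nhds (s := Ioi (0:ℝ)))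
    simpa [Real.sqrt_sq hb.le] using this
  have hB : Tendsto (fun p => 3*b^2/p * Real.log ((p + Real.sqrt (p^2+b^2))/b))
      (𝓝[>] 0) (𝓝 (3*b)) := by
    have hL0 : HasDerivAt (fun p => Real.log ((p + Real.sqrt (p^2+b^2))/b)) (1/b) 0 := by
      have := logDeriv' b 0 hb
      simpa [Real.sqrt_sq hb.le] using this
    have hslope := hasDerivAt_iff_tendsto_slope.mp hL0
    have hmono : 𝓝[>] (0:ℝ) ≤ 𝓝[≠] (0:ℝ) :=
      nhdsWithin_mono _ (fun x hx => ne_of_gt hx)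
    have h1 := (hslope.mono_left hmono).const_mul (3*b^2)
    have h2 : (3*b^2) * (1/b) = 3*b := by field_simp
    rw [h2] at h1
    apply h1.congr'
    filter_upwards [self_mem_nhdsWithin] with x (hx : 0 < x)
    have : slope (fun p => Real.log ((p + Real.sqrt (p^2+b^2))/b)) 0 x
        = Real.log ((x + Real.sqrt (x^2+b^2))/b) / x := by
      rw [slope_def_field]
      simp [Real.sqrt_sq hb.le, div_self hb.ne']
    rw [this]
    ring
  have hC : Tendsto (fun p => 2*b^2*(Real.sqrt (p^2+b^2)-b)/p^2) (𝓝[>] 0) (𝓝 b) := by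
    have hden : ContinuousAt (fun p : ℝ => Real.sqrt (p^2+b^2)+b) 0 :=
      (sqrtDeriv b 0 hb).continuousAt.add continuousAt_const
    have hne : Real.sqrt ((0:ℝ)^2+b^2) + b ≠ 0 := by
      have : Real.sqrt ((0:ℝ)^2+b^2) = b := by simp [Real.sqrt_sq hb.le]
      rw [this]; positivity
    have hcont : Tendsto (fun p : ℝ => 2*b^2/(Real.sqrt (p^2+b^2)+b)) (𝓝[>] 0)
        (𝓝 (2*b^2/(Real.sqrt ((0:ℝ)^2+b^2)+b))) :=
      Tendsto.mono_left (ContinuousAt.div continuousAt_const hden hne) nhdsWithin_le_nhds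
    have hv : 2*b^2/(Real.sqrt ((0:ℝ)^2+b^2)+b) = b := by
      rw [show Real.sqrt ((0:ℝ)^2+b^2) = b by simp [Real.sqrt_sq hb.le]]
      field_simp
      ring
    rw [hv] at hcont
    apply hcont.congr'
    filter_upwards [self_mem_nhdsWithin] with x (hx : 0 < x)
    have h1 : (0:ℝ) < x^2+b^2 := by positivity
    have hr : 0 < Real.sqrt (x^2+b^2) := Real.sqrt_pos.mpr h1
    have hr2 : Real.sqrt (x^2+b^2)^2 = x^2+b^2 := Real.sq_sqrt h1.le
    rw [div_eq_div_iff (by positivity) (by positivity)]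
    nlinarith [hr2]
  have h3 : b + 3*b - b = 3*b := by ring
  have := (hA.add hB).sub hC
  rwa [h3] at this


/-- Level-2 PBF integral (case #6):
∫₀^P [R(p)/p − (3h²/p²) ln((p+R(p))/h) + 4h²(R(p)−h)/p³] dp
  = √(P²+h²) − 3h + (3h²/P) ln((P+√(P²+h²))/h) − 2h²(√(P²+h²)−h)/P²,
where R(p) = √(p²+h²). -/
theorem stmt_9 (h P : ℝ) (hh : 0 < h) (hP : 0 < P) :
    ∫ p in (0:ℝ)..P,
        (Real.sqrt (p ^ 2 + h ^ 2) / p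
          - (3 * h ^ 2 / p ^ 2) * Real.log ((p + Real.sqrt (p ^ 2 + h ^ 2)) / h)
          + 4 * h ^ 2 * (Real.sqrt (p ^ 2 + h ^ 2) - h) / p ^ 3)
      = Real.sqrt (P ^ 2 + h ^ 2) - 3 * h
          + (3 * h ^ 2 / P) * Real.log ((P + Real.sqrt (P ^ 2 + h ^ 2)) / h)
          - 2 * h ^ 2 * (Real.sqrt (P ^ 2 + h ^ 2) - h) / P ^ 2 := by
  have hint : IntervalIntegrable (fun p =>
      Real.sqrt (p ^ 2 + h ^ 2) / p
        - (3 * h ^ 2 / p ^ 2) * Real.log ((p + Real.sqrt (p ^ 2 + h ^ 2)) / h)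
        + 4 * h ^ 2 * (Real.sqrt (p ^ 2 + h ^ 2) - h) / p ^ 3)
      MeasureTheory.volume 0 P := by
    apply ContinuousOn.intervalIntegrable
    rw [uIcc_of_le hP.le]
    intro x hx
    rcases hx.1.eq_or_lt with h0 | h0
    · subst h0
      rw [← continuousWithinAt_diff_self]
      have hsub : Icc (0:ℝ) P \ {0} ⊆ Ioi 0 :=
        fun y hy => lt_of_le_of_ne hy.1.1 (Ne.symm hy.2)
      have ht := (tendg0 h P hh hP).mono_left (nhdsWithin_mono _ hsub)
      show Tendsto _ (𝓝[Icc 0 P \ {0}] 0) (𝓝 _)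
      convert ht using 2
      simp [Real.sqrt_sq hh.le]
    · apply ContinuousAt.continuousWithinAt
      have c1 : ContinuousAt (fun p : ℝ => Real.sqrt (p^2+h^2)) x :=
        (sqrtDeriv h x hh).continuousAt
      have c2 : ContinuousAt (fun p : ℝ => Real.log ((p + Real.sqrt (p^2+h^2))/h)) x :=
        (logDeriv' h x hh).continuousAt
      exact ((c1.div continuousAt_id h0.ne').sub
          ((continuousAt_const.div (continuousAt_id.pow 2) (pow_ne_zero 2 h0.ne')).mul c2)).add
        ((continuousAt_const.mul (c1.sub continuousAt_const)).div
          (continuousAt_id.pow 3) (pow_ne_zero 3 h0.ne'))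
  have key := intervalIntegral.integral_eq_sub_of_hasDerivAt_of_tendsto hP
    (fun x hx => FDeriv h x hh hx.1) hint (tendF0 h hh)
    ((FDeriv h P hh hP).continuousAt.tendsto.mono_left nhdsWithin_le_nhds)
  rw [key]
  ring
end

section
/- For all real numbers h1 > 0, h2 > 0, and P > 0, setting h = √(h1² + h2²) and R4 = √(P² + h²), ∫₀^P ( √(p² + h²) − h2 ) / (p² + h1²) dp = ln( (P + R4) / h ) − (h2/h1) · arctan( h1·P / (h² + h2·R4) ). -/
private lemma deriv_aux (h1 h2 : ℝ) (hh1 : 0 < h1) (hh2 : 0 < h2) (x : ℝ) (hx : 0 ≤ x) :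
    HasDerivAt (fun y : ℝ => Real.log (y + Real.sqrt (y ^ 2 + (h1 ^ 2 + h2 ^ 2)))
        - (h2 / h1) * Real.arctan (h1 * y / ((h1 ^ 2 + h2 ^ 2)
            + h2 * Real.sqrt (y ^ 2 + (h1 ^ 2 + h2 ^ 2)))))
      ((Real.sqrt (x ^ 2 + (h1 ^ 2 + h2 ^ 2)) - h2) / (x ^ 2 + h1 ^ 2)) x := by
  have hc : (0:ℝ) < h1 ^ 2 + h2 ^ 2 := by positivity
  set c := h1 ^ 2 + h2 ^ 2 with hc_def
  set s := Real.sqrt (x ^ 2 + c) with hs_def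
  have hxc : 0 < x ^ 2 + c := by positivity
  have hs_pos : 0 < s := Real.sqrt_pos.mpr hxc
  have hs_sq : s ^ 2 = x ^ 2 + c := Real.sq_sqrt hxc.le
  have hinner : HasDerivAt (fun y : ℝ => y ^ 2 + c) (2 * x) x := by
    simpa using (hasDerivAt_pow 2 x).add_const c
  have hsqrt : HasDerivAt (fun y : ℝ => Real.sqrt (y ^ 2 + c)) (x / s) x := by
    have h := hinner.sqrt hxc.ne'
    convert h using 1
    rw [← hs_def]
    field_simp
  have hxs : (0:ℝ) < x + s := by positivity
  have hlog : HasDerivAt (fun y : ℝ => Real.log (y + Real.sqrt (y ^ 2 + c))) (1 / s) x := by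
    have hadd : HasDerivAt (fun y : ℝ => y + Real.sqrt (y ^ 2 + c)) (1 + x / s) x :=
      (hasDerivAt_id x).add hsqrt
    have h := hadd.log hxs.ne'
    convert h using 1
    field_simp
    ring
  have hden_pos : 0 < c + h2 * s := by positivity
  have hnum : HasDerivAt (fun y : ℝ => h1 * y) h1 x := by
    simpa using (hasDerivAt_id x).const_mul h1
  have hden : HasDerivAt (fun y : ℝ => c + h2 * Real.sqrt (y ^ 2 + c)) (h2 * (x / s)) x :=
    (hsqrt.const_mul h2).const_add c
  have hu : HasDerivAt (fun y : ℝ => h1 * y / (c + h2 * Real.sqrt (y ^ 2 + c)))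
      ((h1 * (c + h2 * s) - h1 * x * (h2 * (x / s))) / (c + h2 * s) ^ 2) x :=
    hnum.div hden hden_pos.ne'
  have harctan :
      HasDerivAt (fun y : ℝ => Real.arctan (h1 * y / (c + h2 * Real.sqrt (y ^ 2 + c))))
        (h1 / (s * (s + h2))) x := by
    have h := hu.arctan
    convert h using 1
    have key : (c + h2 * s) ^ 2 + h1 ^ 2 * x ^ 2 = c * (s + h2) ^ 2 := by
      have : h2 ^ 2 * s ^ 2 + h1 ^ 2 * x ^ 2 = h2 ^ 2 * (x ^ 2 + c) + h1 ^ 2 * x ^ 2 := by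
        rw [hs_sq]
      nlinarith [hs_sq, hc_def]
    have hsh2 : (0:ℝ) < s + h2 := by positivity
    have e1 : h1 * (c + h2 * s) - h1 * x * (h2 * (x / s)) = h1 * c * (s + h2) / s := by
      rw [eq_div_iff hs_pos.ne']
      have hxs' : x / s * s = x := div_mul_cancel₀ x hs_pos.ne'
      linear_combination h1 * h2 * hs_sq - h1 * h2 * x * hxs'
    have e2 : 1 + (h1 * x / (c + h2 * s)) ^ 2 = c * (s + h2) ^ 2 / (c + h2 * s) ^ 2 := by
      field_simp
      linear_combination key
    rw [← hs_def, e1, e2]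
    field_simp
  have hF : HasDerivAt (fun y : ℝ => Real.log (y + Real.sqrt (y ^ 2 + c))
      - (h2 / h1) * Real.arctan (h1 * y / (c + h2 * Real.sqrt (y ^ 2 + c))))
      (1 / s - (h2 / h1) * (h1 / (s * (s + h2)))) x :=
    hlog.sub (harctan.const_mul (h2 / h1))
  convert hF using 1
  have hsh2 : (0:ℝ) < s + h2 := by positivity
  have hx1 : (0:ℝ) < x ^ 2 + h1 ^ 2 := by positivity
  field_simp
  nlinarith [hs_sq]

/-- Level-1 PBF integral (case #3): with h = √(h₁²+h₂²), R₄ = √(P²+h²),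
∫₀^P (√(p²+h²) − h₂)/(p²+h₁²) dp = ln((P+R₄)/h) − (h₂/h₁) arctan(h₁P/(h²+h₂R₄)). -/
theorem stmt_10 (h1 h2 P : ℝ) (hh1 : 0 < h1) (hh2 : 0 < h2) (hP : 0 < P) :
    (∫ p in (0:ℝ)..P,
        (Real.sqrt (p ^ 2 + (h1 ^ 2 + h2 ^ 2)) - h2) / (p ^ 2 + h1 ^ 2))
      = Real.log ((P + Real.sqrt (P ^ 2 + (h1 ^ 2 + h2 ^ 2)))
            / Real.sqrt (h1 ^ 2 + h2 ^ 2))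
        - (h2 / h1) * Real.arctan (h1 * P
            / ((h1 ^ 2 + h2 ^ 2) + h2 * Real.sqrt (P ^ 2 + (h1 ^ 2 + h2 ^ 2)))) := by
  have hc : (0:ℝ) < h1 ^ 2 + h2 ^ 2 := by positivity
  have hint : IntervalIntegrable
      (fun p : ℝ => (Real.sqrt (p ^ 2 + (h1 ^ 2 + h2 ^ 2)) - h2) / (p ^ 2 + h1 ^ 2))
      MeasureTheory.volume 0 P := by
    apply Continuous.intervalIntegrable
    apply Continuous.div
    · exact ((continuous_pow 2).add continuous_const).sqrt.sub continuous_const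
    · exact (continuous_pow 2).add continuous_const
    · intro p; positivity
  have key := intervalIntegral.integral_eq_sub_of_hasDerivAt
    (f := fun y : ℝ => Real.log (y + Real.sqrt (y ^ 2 + (h1 ^ 2 + h2 ^ 2)))
        - (h2 / h1) * Real.arctan (h1 * y / ((h1 ^ 2 + h2 ^ 2)
            + h2 * Real.sqrt (y ^ 2 + (h1 ^ 2 + h2 ^ 2)))))
    (fun x hx => by
      rw [Set.uIcc_of_le hP.le] at hx
      exact deriv_aux h1 h2 hh1 hh2 x hx.1) hint
  rw [key, Real.log_div (by positivity) (by positivity)]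
  norm_num [Real.arctan_zero]
  ring
end

section
/- For all real numbers h1 > 0, h3 > 0, and P > 0, setting h = √(h1² + h3²), R1(p) = √(p² + h1²), R4(p) = √(p² + h²), ∫₀^P (1/(p² + h1²)) · [ R4(p) − 2h3 + (h3²/R1(p)) · ln( (R1(p) + R4(p)) / h3 ) ] dp = (1 − h3²/h1²) · ln( (P + R4(P)) / h ) − (2h3/h1) · arctan( h1·P / (h² + h3·R4(P)) ) + (h3²/h1²) · (P/R1(P)) · ln( (R1(P) + R4(P)) / h3 ). -/
private lemma sqrt_deriv_aux (c : ℝ) (hc : 0 < c) (x : ℝ) :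
    HasDerivAt (fun p : ℝ => Real.sqrt (p ^ 2 + c)) (x / Real.sqrt (x ^ 2 + c)) x := by
  have h0 : (0:ℝ) < x ^ 2 + c := by positivity
  have hs : (0:ℝ) < Real.sqrt (x ^ 2 + c) := Real.sqrt_pos.2 h0
  have h : HasDerivAt (fun p : ℝ => p ^ 2 + c) (2 * x) x := by
    simpa using (hasDerivAt_pow 2 x).add_const c
  have := h.sqrt (ne_of_gt h0)
  convert this using 1
  field_simp

set_option maxHeartbeats 1000000 in
private lemma key_deriv (h1 h3 : ℝ) (hh1 : 0 < h1) (hh3 : 0 < h3) :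
  ∀ x : ℝ, HasDerivAt (fun p : ℝ =>
    (1 - h3 ^ 2 / h1 ^ 2) *
        Real.log ((p + Real.sqrt (p ^ 2 + (h1 ^ 2 + h3 ^ 2)))
          / Real.sqrt (h1 ^ 2 + h3 ^ 2))
      - (2 * h3 / h1) *
          Real.arctan (h1 * p
            / ((h1 ^ 2 + h3 ^ 2) + h3 * Real.sqrt (p ^ 2 + (h1 ^ 2 + h3 ^ 2))))
      + (h3 ^ 2 / h1 ^ 2) *
          ((p / Real.sqrt (p ^ 2 + h1 ^ 2)) *
            Real.log ((Real.sqrt (p ^ 2 + h1 ^ 2)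
              + Real.sqrt (p ^ 2 + (h1 ^ 2 + h3 ^ 2))) / h3)))
    ((1 / (x ^ 2 + h1 ^ 2)) *
      (Real.sqrt (x ^ 2 + (h1 ^ 2 + h3 ^ 2)) - 2 * h3
        + (h3 ^ 2 / Real.sqrt (x ^ 2 + h1 ^ 2)) *
            Real.log ((Real.sqrt (x ^ 2 + h1 ^ 2)
                + Real.sqrt (x ^ 2 + (h1 ^ 2 + h3 ^ 2))) / h3))) x := by
  intro x
  have h01 : (0:ℝ) < x ^ 2 + h1 ^ 2 := by positivity
  have h04 : (0:ℝ) < x ^ 2 + (h1 ^ 2 + h3 ^ 2) := by positivity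
  set r1 : ℝ := Real.sqrt (x ^ 2 + h1 ^ 2) with hr1def
  set r4 : ℝ := Real.sqrt (x ^ 2 + (h1 ^ 2 + h3 ^ 2)) with hr4def
  have hr1p : (0:ℝ) < r1 := Real.sqrt_pos.2 h01
  have hr4p : (0:ℝ) < r4 := Real.sqrt_pos.2 h04
  have hr1 : r1 ^ 2 = x ^ 2 + h1 ^ 2 := Real.sq_sqrt h01.le
  have hr4 : r4 ^ 2 = x ^ 2 + (h1 ^ 2 + h3 ^ 2) := Real.sq_sqrt h04.le
  have hxr4 : 0 < x + r4 := by
    have h1' : |x| < r4 := by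
      rw [hr4def, ← Real.sqrt_sq_eq_abs]
      exact Real.sqrt_lt_sqrt (by positivity) (by nlinarith)
    have := neg_abs_le x
    linarith
  have hden : (0:ℝ) < (h1 ^ 2 + h3 ^ 2) + h3 * r4 := by positivity
  have hr1d : HasDerivAt (fun p : ℝ => Real.sqrt (p ^ 2 + h1 ^ 2)) (x / r1) x :=
    sqrt_deriv_aux _ (by positivity) x
  have hr4d : HasDerivAt (fun p : ℝ => Real.sqrt (p ^ 2 + (h1 ^ 2 + h3 ^ 2))) (x / r4) x :=
    sqrt_deriv_aux _ (by positivity) x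
  -- term A
  have hA : HasDerivAt (fun p : ℝ =>
      Real.log ((p + Real.sqrt (p ^ 2 + (h1 ^ 2 + h3 ^ 2)))
        / Real.sqrt (h1 ^ 2 + h3 ^ 2))) (1 / r4) x := by
    have h' := (((hasDerivAt_id x).add hr4d).div_const
      (Real.sqrt (h1 ^ 2 + h3 ^ 2))).log (by
        have : 0 < (x + r4) / Real.sqrt (h1 ^ 2 + h3 ^ 2) := by positivity
        exact ne_of_gt this)
    refine h'.congr_deriv (Eq.symm ?_)
    simp only [Pi.add_apply, id]
    rw [← hr4def]
    field_simp
    ring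
  -- term B
  have hB : HasDerivAt (fun p : ℝ =>
      Real.arctan (h1 * p
        / ((h1 ^ 2 + h3 ^ 2) + h3 * Real.sqrt (p ^ 2 + (h1 ^ 2 + h3 ^ 2)))))
      (h1 / (r4 * (r4 + h3))) x := by
    have hnum : HasDerivAt (fun p : ℝ => h1 * p) h1 x := by
      simpa using (hasDerivAt_id x).const_mul h1
    have hd : HasDerivAt (fun p : ℝ =>
        (h1 ^ 2 + h3 ^ 2) + h3 * Real.sqrt (p ^ 2 + (h1 ^ 2 + h3 ^ 2)))
        (h3 * (x / r4)) x := (hr4d.const_mul h3).const_add (h1 ^ 2 + h3 ^ 2)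
    have hu := hnum.div hd (ne_of_gt hden)
    have h' := hu.arctan
    refine h'.congr_deriv (Eq.symm ?_)
    simp only [Pi.div_apply]
    have hr4h3 : (0:ℝ) < r4 + h3 := by positivity
    rw [← hr4def]
    field_simp
    linear_combination (-(h1 ^ 2 + h3 ^ 2 + h3 * r4)) * hr4
  -- term C
  have hC : HasDerivAt (fun p : ℝ =>
      (p / Real.sqrt (p ^ 2 + h1 ^ 2)) *
        Real.log ((Real.sqrt (p ^ 2 + h1 ^ 2)
          + Real.sqrt (p ^ 2 + (h1 ^ 2 + h3 ^ 2))) / h3))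
      (h1 ^ 2 / r1 ^ 3 * Real.log ((r1 + r4) / h3) + x ^ 2 / (r1 ^ 2 * r4)) x := by
    have hq : HasDerivAt (fun p : ℝ => p / Real.sqrt (p ^ 2 + h1 ^ 2))
        ((1 * r1 - x * (x / r1)) / r1 ^ 2) x :=
      (hasDerivAt_id x).div hr1d (ne_of_gt hr1p)
    have hLpos : (0:ℝ) < (r1 + r4) / h3 := by positivity
    have hL : HasDerivAt (fun p : ℝ =>
        Real.log ((Real.sqrt (p ^ 2 + h1 ^ 2)
          + Real.sqrt (p ^ 2 + (h1 ^ 2 + h3 ^ 2))) / h3))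
        (((x / r1 + x / r4) / h3) / ((r1 + r4) / h3)) x :=
      ((hr1d.add hr4d).div_const h3).log (ne_of_gt hLpos)
    have h' := hq.mul hL
    refine h'.congr_deriv (Eq.symm ?_)
    have e1 : (1 * r1 - x * (x / r1)) / r1 ^ 2 = h1 ^ 2 / r1 ^ 3 := by
      field_simp
      linear_combination hr1
    have e2 : (((x / r1 + x / r4) / h3) / ((r1 + r4) / h3)) = x / (r1 * r4) := by
      field_simp
      ring
    rw [e1, e2]
    field_simp
    ring
  have hsum := ((hA.const_mul (1 - h3 ^ 2 / h1 ^ 2)).sub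
      (hB.const_mul (2 * h3 / h1))).add (hC.const_mul (h3 ^ 2 / h1 ^ 2))
  refine hsum.congr_deriv (Eq.symm ?_)
  have hr4h3 : (0:ℝ) < r4 + h3 := by positivity
  set L := Real.log ((r1 + r4) / h3) with hL
  field_simp
  linear_combination (r1 ^ 3 * h1 ^ 2 * (r4 - h3)) * hr4 + (r1 ^ 3 * ((h1 ^ 2 - h3 ^ 2) * (r4 + h3)
    - h1 ^ 2 * 2 * h3) + h3 ^ 2 * (r4 + h3) * (h1 ^ 2 * r4 * L + x ^ 2 * r1)
    + r1 ^ 3 * (h3 ^ 2 * (r4 + h3) - h1 ^ 2 * (r4 - h3))) * hr1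

/-- Level-1 PBF integral (case #4): with h = √(h₁²+h₃²), R₁(p) = √(p²+h₁²),
R₄(p) = √(p²+h²),
∫₀^P (1/(p²+h₁²))[R₄(p) − 2h₃ + (h₃²/R₁(p)) ln((R₁(p)+R₄(p))/h₃)] dp
  = (1 − h₃²/h₁²) ln((P+R₄(P))/h) − (2h₃/h₁) arctan(h₁P/(h²+h₃R₄(P)))
    + (h₃²/h₁²)(P/R₁(P)) ln((R₁(P)+R₄(P))/h₃). -/
theorem stmt_11 (h1 h3 P : ℝ) (hh1 : 0 < h1) (hh3 : 0 < h3) (hP : 0 < P) :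
    (∫ p in (0:ℝ)..P,
        (1 / (p ^ 2 + h1 ^ 2)) *
          (Real.sqrt (p ^ 2 + (h1 ^ 2 + h3 ^ 2)) - 2 * h3
            + (h3 ^ 2 / Real.sqrt (p ^ 2 + h1 ^ 2)) *
                Real.log ((Real.sqrt (p ^ 2 + h1 ^ 2)
                    + Real.sqrt (p ^ 2 + (h1 ^ 2 + h3 ^ 2))) / h3)))
      = (1 - h3 ^ 2 / h1 ^ 2) *
            Real.log ((P + Real.sqrt (P ^ 2 + (h1 ^ 2 + h3 ^ 2)))
              / Real.sqrt (h1 ^ 2 + h3 ^ 2))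
        - (2 * h3 / h1) *
            Real.arctan (h1 * P
              / ((h1 ^ 2 + h3 ^ 2) + h3 * Real.sqrt (P ^ 2 + (h1 ^ 2 + h3 ^ 2))))
        + (h3 ^ 2 / h1 ^ 2) * (P / Real.sqrt (P ^ 2 + h1 ^ 2)) *
            Real.log ((Real.sqrt (P ^ 2 + h1 ^ 2)
              + Real.sqrt (P ^ 2 + (h1 ^ 2 + h3 ^ 2))) / h3) := by
  have hh2 : (0:ℝ) < h1 ^ 2 + h3 ^ 2 := by positivity
  have hhpos : (0:ℝ) < Real.sqrt (h1 ^ 2 + h3 ^ 2) := Real.sqrt_pos.2 hh2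
  -- the antiderivative
  set F : ℝ → ℝ := fun p =>
    (1 - h3 ^ 2 / h1 ^ 2) *
        Real.log ((p + Real.sqrt (p ^ 2 + (h1 ^ 2 + h3 ^ 2)))
          / Real.sqrt (h1 ^ 2 + h3 ^ 2))
      - (2 * h3 / h1) *
          Real.arctan (h1 * p
            / ((h1 ^ 2 + h3 ^ 2) + h3 * Real.sqrt (p ^ 2 + (h1 ^ 2 + h3 ^ 2))))
      + (h3 ^ 2 / h1 ^ 2) *
          ((p / Real.sqrt (p ^ 2 + h1 ^ 2)) *
            Real.log ((Real.sqrt (p ^ 2 + h1 ^ 2)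
              + Real.sqrt (p ^ 2 + (h1 ^ 2 + h3 ^ 2))) / h3)) with hFdef
  have key := key_deriv h1 h3 hh1 hh3
  have hcont : Continuous fun p : ℝ =>
      (1 / (p ^ 2 + h1 ^ 2)) *
        (Real.sqrt (p ^ 2 + (h1 ^ 2 + h3 ^ 2)) - 2 * h3
          + (h3 ^ 2 / Real.sqrt (p ^ 2 + h1 ^ 2)) *
              Real.log ((Real.sqrt (p ^ 2 + h1 ^ 2)
                  + Real.sqrt (p ^ 2 + (h1 ^ 2 + h3 ^ 2))) / h3)) := by
    have c1 : Continuous fun p : ℝ => p ^ 2 + h1 ^ 2 := (continuous_pow 2).add continuous_const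
    have c4 : Continuous fun p : ℝ => p ^ 2 + (h1 ^ 2 + h3 ^ 2) := (continuous_pow 2).add continuous_const
    have cs1 : Continuous fun p : ℝ => Real.sqrt (p ^ 2 + h1 ^ 2) := c1.sqrt
    have cs4 : Continuous fun p : ℝ => Real.sqrt (p ^ 2 + (h1 ^ 2 + h3 ^ 2)) := c4.sqrt
    have hlog : Continuous fun p : ℝ =>
        Real.log ((Real.sqrt (p ^ 2 + h1 ^ 2)
          + Real.sqrt (p ^ 2 + (h1 ^ 2 + h3 ^ 2))) / h3) := by
      apply Continuous.log ((cs1.add cs4).div_const h3)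
      intro x
      have : (0:ℝ) < Real.sqrt (x ^ 2 + h1 ^ 2) := Real.sqrt_pos.2 (by positivity)
      have : (0:ℝ) < Real.sqrt (x ^ 2 + (h1 ^ 2 + h3 ^ 2)) := Real.sqrt_pos.2 (by positivity)
      show (Real.sqrt (x ^ 2 + h1 ^ 2) + Real.sqrt (x ^ 2 + (h1 ^ 2 + h3 ^ 2))) / h3 ≠ 0
      positivity
    have hinv : Continuous fun p : ℝ => 1 / (p ^ 2 + h1 ^ 2) := by
      apply Continuous.div continuous_const c1
      intro x; positivity
    have hfrac : Continuous fun p : ℝ => h3 ^ 2 / Real.sqrt (p ^ 2 + h1 ^ 2) := by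
      apply Continuous.div continuous_const cs1
      intro x
      have : (0:ℝ) < Real.sqrt (x ^ 2 + h1 ^ 2) := Real.sqrt_pos.2 (by positivity)
      exact ne_of_gt this
    exact hinv.mul ((cs4.sub continuous_const).add (hfrac.mul hlog))
  have hint := intervalIntegral.integral_eq_sub_of_hasDerivAt
    (f := F) (a := (0:ℝ)) (b := P) (fun x _ => key x) (hcont.intervalIntegrable 0 P)
  rw [hint]
  have hF0 : F 0 = 0 := by
    show (1 - h3 ^ 2 / h1 ^ 2) *
        Real.log ((0 + Real.sqrt (0 ^ 2 + (h1 ^ 2 + h3 ^ 2)))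
          / Real.sqrt (h1 ^ 2 + h3 ^ 2))
      - (2 * h3 / h1) *
          Real.arctan (h1 * 0
            / ((h1 ^ 2 + h3 ^ 2) + h3 * Real.sqrt (0 ^ 2 + (h1 ^ 2 + h3 ^ 2))))
      + (h3 ^ 2 / h1 ^ 2) *
          ((0 / Real.sqrt (0 ^ 2 + h1 ^ 2)) *
            Real.log ((Real.sqrt (0 ^ 2 + h1 ^ 2)
              + Real.sqrt (0 ^ 2 + (h1 ^ 2 + h3 ^ 2))) / h3)) = 0
    have e : Real.sqrt (0 ^ 2 + (h1 ^ 2 + h3 ^ 2)) = Real.sqrt (h1 ^ 2 + h3 ^ 2) := by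
      norm_num
    rw [e, zero_add, div_self (ne_of_gt hhpos), Real.log_one]
    norm_num
  rw [hF0, sub_zero]
  show (1 - h3 ^ 2 / h1 ^ 2) *
        Real.log ((P + Real.sqrt (P ^ 2 + (h1 ^ 2 + h3 ^ 2)))
          / Real.sqrt (h1 ^ 2 + h3 ^ 2))
      - (2 * h3 / h1) *
          Real.arctan (h1 * P
            / ((h1 ^ 2 + h3 ^ 2) + h3 * Real.sqrt (P ^ 2 + (h1 ^ 2 + h3 ^ 2))))
      + (h3 ^ 2 / h1 ^ 2) *
          ((P / Real.sqrt (P ^ 2 + h1 ^ 2)) *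
            Real.log ((Real.sqrt (P ^ 2 + h1 ^ 2)
              + Real.sqrt (P ^ 2 + (h1 ^ 2 + h3 ^ 2))) / h3)) = _
  ring
end

section
/- For all real numbers h > 0 and P > 0, ∫₀^P [ (p² + 2h²) / ( p² · √(p² + h²) ) − 2h / p² ] dp = ln( (P + √(P² + h²)) / h ) − 2P / ( √(P² + h²) + h ). -/
lemma sqrt_pos_aux (h p : ℝ) (hh : 0 < h) : 0 < Real.sqrt (p ^ 2 + h ^ 2) :=
  Real.sqrt_pos.mpr (by positivity)

lemma sqrt_gt_neg (h p : ℝ) (hh : 0 < h) : -p < Real.sqrt (p ^ 2 + h ^ 2) := by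
  have h1 : |p| < Real.sqrt (p ^ 2 + h ^ 2) := by
    rw [← Real.sqrt_sq_eq_abs]
    exact Real.sqrt_lt_sqrt (by positivity) (by nlinarith)
  calc -p ≤ |p| := neg_le_abs p
  _ < _ := h1

/-- The integrand equals a continuous function. -/
lemma integrand_eq (h : ℝ) (hh : 0 < h) (p : ℝ) :
    ((p ^ 2 + 2 * h ^ 2) / (p ^ 2 * Real.sqrt (p ^ 2 + h ^ 2)) - 2 * h / p ^ 2)
      = p ^ 2 / (Real.sqrt (p ^ 2 + h ^ 2) * (Real.sqrt (p ^ 2 + h ^ 2) + h) ^ 2) := by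
  rcases eq_or_ne p 0 with rfl | hp
  · simp
  · set s := Real.sqrt (p ^ 2 + h ^ 2) with hs
    have hspos : 0 < s := sqrt_pos_aux h p hh
    have hsq : s ^ 2 = p ^ 2 + h ^ 2 := Real.sq_sqrt (by positivity)
    have hsh : s + h ≠ 0 := by positivity
    have hsne : s ≠ 0 := ne_of_gt hspos
    field_simp
    linear_combination (2*s^2-2*h^2-(s+h)^2-(s^2-p^2-h^2)) * hsq

lemma hasDeriv_aux (h : ℝ) (hh : 0 < h) (p : ℝ) :
    HasDerivAt (fun p => Real.log ((p + Real.sqrt (p ^ 2 + h ^ 2)) / h)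
        - 2 * p / (Real.sqrt (p ^ 2 + h ^ 2) + h))
      (p ^ 2 / (Real.sqrt (p ^ 2 + h ^ 2) * (Real.sqrt (p ^ 2 + h ^ 2) + h) ^ 2)) p := by
  set s := Real.sqrt (p ^ 2 + h ^ 2) with hs
  have hspos : 0 < s := sqrt_pos_aux h p hh
  have hsq : s ^ 2 = p ^ 2 + h ^ 2 := Real.sq_sqrt (by positivity)
  have hps : 0 < p + s := by have := sqrt_gt_neg h p hh; linarith
  have hsne : s ≠ 0 := ne_of_gt hspos
  have hpsne : p + s ≠ 0 := ne_of_gt hps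
  have hshne : s + h ≠ 0 := by positivity
  have hhne : h ≠ 0 := ne_of_gt hh
  have hu : HasDerivAt (fun p : ℝ => p ^ 2 + h ^ 2) (2 * p) p := by
    simpa using (hasDerivAt_pow 2 p).add_const (h ^ 2)
  have hsd : HasDerivAt (fun p : ℝ => Real.sqrt (p ^ 2 + h ^ 2)) (p / s) p := by
    have := (Real.hasDerivAt_sqrt (x := p ^ 2 + h ^ 2) (by positivity)).comp p hu
    refine this.congr_deriv ?_
    rw [← hs]
    field_simp
  have hinner : HasDerivAt (fun p : ℝ => p + Real.sqrt (p ^ 2 + h ^ 2)) (1 + p / s) p :=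
    (hasDerivAt_id p).add hsd
  have hdiv : HasDerivAt (fun p : ℝ => (p + Real.sqrt (p ^ 2 + h ^ 2)) / h)
      ((1 + p / s) / h) p := hinner.div_const h
  have hlog : HasDerivAt (fun p : ℝ => Real.log ((p + Real.sqrt (p ^ 2 + h ^ 2)) / h))
      (((1 + p / s) / h) / ((p + s) / h)) p := by
    apply hdiv.log
    positivity
  have h2 : HasDerivAt (fun p : ℝ => 2 * p / (Real.sqrt (p ^ 2 + h ^ 2) + h))
      ((2 * (s + h) - 2 * p * (p / s)) / (s + h) ^ 2) p := by
    have hnum : HasDerivAt (fun p : ℝ => 2 * p) 2 p := by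
      simpa using (hasDerivAt_id p).const_mul 2
    have hden : HasDerivAt (fun p : ℝ => Real.sqrt (p ^ 2 + h ^ 2) + h) (p / s) p :=
      hsd.add_const h
    have := hnum.div hden (by positivity)
    exact this
  have heq : ((1 + p / s) / h) / ((p + s) / h) - (2 * (s + h) - 2 * p * (p / s)) / (s + h) ^ 2
      = p ^ 2 / (s * (s + h) ^ 2) := by
    have e1 : ((1 + p / s) / h) / ((p + s) / h) = 1 / s := by
      field_simp; ring
    have e2 : (2 * (s + h) - 2 * p * (p / s)) / (s + h) ^ 2 = 2 * h / (s * (s + h)) := by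
      field_simp
      linear_combination hsq
    rw [e1, e2]
    field_simp
    linear_combination hsq
  rw [← heq]
  exact hlog.sub h2

/-- Level-3 PBF integral for the double-layer kernel (cases #6, #7):
∫₀^P [(p²+2h²)/(p²√(p²+h²)) − 2h/p²] dp
  = ln((P+√(P²+h²))/h) − 2P/(√(P²+h²)+h). -/
theorem stmt_13 (h P : ℝ) (hh : 0 < h) (hP : 0 < P) :
    ∫ p in (0:ℝ)..P,
        ((p ^ 2 + 2 * h ^ 2) / (p ^ 2 * Real.sqrt (p ^ 2 + h ^ 2)) - 2 * h / p ^ 2)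
      = Real.log ((P + Real.sqrt (P ^ 2 + h ^ 2)) / h)
          - 2 * P / (Real.sqrt (P ^ 2 + h ^ 2) + h) := by
  have hc : Continuous fun p : ℝ => Real.sqrt (p ^ 2 + h ^ 2) :=
    Real.continuous_sqrt.comp (by continuity)
  have key : ∫ p in (0:ℝ)..P,
      p ^ 2 / (Real.sqrt (p ^ 2 + h ^ 2) * (Real.sqrt (p ^ 2 + h ^ 2) + h) ^ 2)
      = (Real.log ((P + Real.sqrt (P ^ 2 + h ^ 2)) / h)
          - 2 * P / (Real.sqrt (P ^ 2 + h ^ 2) + h))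
        - (Real.log ((0 + Real.sqrt ((0:ℝ) ^ 2 + h ^ 2)) / h)
          - 2 * 0 / (Real.sqrt ((0:ℝ) ^ 2 + h ^ 2) + h)) := by
    apply intervalIntegral.integral_eq_sub_of_hasDerivAt
    · intro p _
      exact hasDeriv_aux h hh p
    · apply Continuous.intervalIntegrable
      refine (continuous_pow 2).div (hc.mul ((hc.add continuous_const).pow 2)) ?_
      intro x
      have := sqrt_pos_aux h x hh
      positivity
  simp only [integrand_eq h hh]
  rw [key]
  have h0 : Real.sqrt ((0:ℝ) ^ 2 + h ^ 2) = h := by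
    simp [Real.sqrt_sq hh.le]
  rw [h0]
  simp [div_self (ne_of_gt hh)]
end

section
/- For all real numbers h1 > 0, h4 > 0, and P > 0, setting h = √(h1² + h4²), R1(p) = √(p² + h1²), R4(p) = √(p² + h²), ∫₀^P (1/(p² + h1²)) · [ 1/(R4(p) + h4) − (1/R1(p)) · ln( (R1(p) + R4(p)) / h4 ) + 1/(2h4) ] dp = (1/h1²) · [ ln( (P + R4(P)) / h ) + ((h1² − h4²)/(2·h1·h4)) · arctan( h1·P / (h² + h4·R4(P)) ) − (P/R1(P)) · ln( (R1(P) + R4(P)) / h4 ) + P / ( 2·(R4(P) + h4) ) ]. -/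
lemma hasDerivAt_sqrt_sq_add (x c : ℝ) (hc : 0 < c) :
    HasDerivAt (fun p : ℝ => Real.sqrt (p^2 + c)) (x / Real.sqrt (x^2 + c)) x := by
  have h0 : (0:ℝ) < x^2 + c := by positivity
  have h1 : HasDerivAt (fun p : ℝ => p^2 + c) (2*x) x := by
    simpa using (hasDerivAt_pow 2 x).add_const c
  have h2 := (Real.hasDerivAt_sqrt h0.ne').comp x h1
  refine h2.congr_deriv (Eq.symm ?_)
  have hs : (0:ℝ) < Real.sqrt (x^2+c) := Real.sqrt_pos.mpr h0
  field_simp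

lemma algebra_key (h1 h4 x s1 s4 L : ℝ) (hh1 : 0 < h1) (hh4 : 0 < h4)
    (hs1p : 0 < s1) (hs4p : 0 < s4)
    (hs1 : s1^2 = x^2 + h1^2) (hs4 : s4^2 = x^2 + (h1^2 + h4^2)) :
    (1/h1^2) * (1/s4 + ((h1^2-h4^2)/(2*h1*h4)) * (h1/(s4*(s4+h4)))
      - ((h1^2/s1^3) * L + (x/s1) * (x/(s1*s4)))
      + ((h1^2+h4^2) + h4*s4)/(2*s4*(s4+h4)^2))
    = (1/(x^2+h1^2)) * (1/(s4+h4) - (1/s1)*L + 1/(2*h4)) := by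
  rw [show x^2 + h1^2 = s1^2 from hs1.symm]
  field_simp
  linear_combination s1*(2*h4*(s4+h4)^2 + h1^2*(s4+2*h4)) * hs1 - s1*h1^2*(s4+2*h4) * hs4

lemma hasDerivAt_F (h1 h4 : ℝ) (hh1 : 0 < h1) (hh4 : 0 < h4) (x : ℝ) :
    HasDerivAt (fun p : ℝ =>
      (1/h1^2) * (Real.log (p + Real.sqrt (p^2 + (h1^2+h4^2))) - Real.log (Real.sqrt (h1^2+h4^2))
        + ((h1^2-h4^2)/(2*h1*h4)) * Real.arctan (h1*p/((h1^2+h4^2) + h4 * Real.sqrt (p^2+(h1^2+h4^2))))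
        - (p / Real.sqrt (p^2+h1^2)) * (Real.log (Real.sqrt (p^2+h1^2) + Real.sqrt (p^2+(h1^2+h4^2))) - Real.log h4)
        + p / (2*(Real.sqrt (p^2+(h1^2+h4^2)) + h4))))
      ((1/(x^2+h1^2)) * (1/(Real.sqrt (x^2+(h1^2+h4^2)) + h4)
         - (1/Real.sqrt (x^2+h1^2)) * Real.log ((Real.sqrt (x^2+h1^2) + Real.sqrt (x^2+(h1^2+h4^2)))/h4)
         + 1/(2*h4))) x := by
  set h2 := h1^2 + h4^2 with hh2
  have hh2p : 0 < h2 := by positivity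
  have hs1p : (0:ℝ) < Real.sqrt (x^2 + h1^2) := Real.sqrt_pos.mpr (by positivity)
  have hs4p : (0:ℝ) < Real.sqrt (x^2 + h2) := Real.sqrt_pos.mpr (by positivity)
  set s1 := Real.sqrt (x^2 + h1^2) with hs1def
  set s4 := Real.sqrt (x^2 + h2) with hs4def
  have hs1 : s1^2 = x^2 + h1^2 := Real.sq_sqrt (by positivity)
  have hs4 : s4^2 = x^2 + h2 := Real.sq_sqrt (by positivity)
  have hxs4 : |x| < s4 := by
    rw [hs4def, ← Real.sqrt_sq_eq_abs]
    exact Real.sqrt_lt_sqrt (by positivity) (by linarith)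
  have hxpos : 0 < x + s4 := by have := neg_abs_le x; linarith
  have hS1 : HasDerivAt (fun p : ℝ => Real.sqrt (p^2 + h1^2)) (x / s1) x :=
    hasDerivAt_sqrt_sq_add x (h1^2) (by positivity)
  have hS4 : HasDerivAt (fun p : ℝ => Real.sqrt (p^2 + h2)) (x / s4) x :=
    hasDerivAt_sqrt_sq_add x h2 hh2p
  -- piece A
  have hA : HasDerivAt (fun p : ℝ => Real.log (p + Real.sqrt (p^2 + h2))) (1/s4) x := by
    have hin : HasDerivAt (fun p : ℝ => p + Real.sqrt (p^2 + h2)) (1 + x/s4) x :=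
      (hasDerivAt_id x).add hS4
    have := (Real.hasDerivAt_log hxpos.ne').comp x hin
    refine this.congr_deriv (Eq.symm ?_)
    field_simp
    ring
  -- piece B
  have hden : (0:ℝ) < h2 + h4 * s4 := by positivity
  have hB : HasDerivAt (fun p : ℝ => Real.arctan (h1 * p / (h2 + h4 * Real.sqrt (p^2 + h2))))
      (h1 / (s4 * (s4 + h4))) x := by
    have hnum : HasDerivAt (fun p : ℝ => h1 * p) h1 x := by
      simpa using (hasDerivAt_id x).const_mul h1
    have hd : HasDerivAt (fun p : ℝ => h2 + h4 * Real.sqrt (p^2 + h2)) (h4 * (x/s4)) x :=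
      (hS4.const_mul h4).const_add h2
    have hu : HasDerivAt (fun p : ℝ => h1 * p / (h2 + h4 * Real.sqrt (p^2 + h2)))
        ((h1 * (h2 + h4*s4) - (h1*x) * (h4*(x/s4))) / (h2 + h4*s4)^2) x :=
      hnum.div hd hden.ne'
    have harc := (Real.hasDerivAt_arctan (h1 * x / (h2 + h4*s4))).comp x hu
    refine harc.congr_deriv (Eq.symm ?_)
    have hkey : (h2 + h4*s4)^2 + (h1*x)^2 = h2 * (s4 + h4)^2 := by
      linear_combination (h4^2 - h2) * hs4
    field_simp
    linear_combination hkey - (s4+h4)*h4*hs4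
  -- piece C
  have hq : HasDerivAt (fun p : ℝ => p / Real.sqrt (p^2 + h1^2)) (h1^2/s1^3) x := by
    have := (hasDerivAt_id x).div hS1 hs1p.ne'
    refine this.congr_deriv (Eq.symm ?_)
    field_simp
    rw [← hs1def]
    simp only [id_eq]
    linear_combination (-(s1^2)) * hs1
  have hs14 : (0:ℝ) < s1 + s4 := by linarith
  have hlog14 : HasDerivAt (fun p : ℝ =>
      Real.log (Real.sqrt (p^2+h1^2) + Real.sqrt (p^2+h2)) - Real.log h4) (x/(s1*s4)) x := by
    have hin : HasDerivAt (fun p : ℝ => Real.sqrt (p^2+h1^2) + Real.sqrt (p^2+h2))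
        (x/s1 + x/s4) x := hS1.add hS4
    have := ((Real.hasDerivAt_log hs14.ne').comp x hin).sub_const (Real.log h4)
    refine this.congr_deriv (Eq.symm ?_)
    field_simp
    ring
  have hC : HasDerivAt (fun p : ℝ => (p / Real.sqrt (p^2+h1^2)) *
      (Real.log (Real.sqrt (p^2+h1^2) + Real.sqrt (p^2+h2)) - Real.log h4))
      ((h1^2/s1^3) * (Real.log (s1 + s4) - Real.log h4) + (x/s1) * (x/(s1*s4))) x :=
    hq.mul hlog14
  -- piece D
  have hD : HasDerivAt (fun p : ℝ => p / (2*(Real.sqrt (p^2+h2) + h4)))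
      ((h2 + h4*s4)/(2*s4*(s4+h4)^2)) x := by
    have hd : HasDerivAt (fun p : ℝ => 2*(Real.sqrt (p^2+h2) + h4)) (2*(x/s4)) x :=
      (hS4.add_const h4).const_mul 2
    have h2s4 : (0:ℝ) < 2*(s4+h4) := by positivity
    have := (hasDerivAt_id x).div hd h2s4.ne'
    refine this.congr_deriv (Eq.symm ?_)
    field_simp
    rw [← hs4def]
    simp only [id_eq]
    linear_combination (-(s4+h4)^2) * hs4
  -- combine
  have hF := ((((hA.sub_const (Real.log (Real.sqrt h2))).add (hB.const_mul
      ((h1^2-h4^2)/(2*h1*h4)))).sub hC).add hD).const_mul (1/h1^2)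
  have hL : Real.log ((s1 + s4)/h4) = Real.log (s1+s4) - Real.log h4 :=
    Real.log_div hs14.ne' hh4.ne'
  refine hF.congr_deriv (Eq.symm ?_)
  rw [hL, ← algebra_key h1 h4 x s1 s4 (Real.log (s1+s4) - Real.log h4) hh1 hh4 hs1p hs4p hs1 hs4]

/-- Level-1 PBF integral for the double-layer kernel (case #6): with
h = √(h₁²+h₄²), R₁(p) = √(p²+h₁²), R₄(p) = √(p²+h²),
∫₀^P (1/(p²+h₁²))[1/(R₄(p)+h₄) − (1/R₁(p)) ln((R₁(p)+R₄(p))/h₄) + 1/(2h₄)] dp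
  = (1/h₁²)[ln((P+R₄(P))/h) + ((h₁²−h₄²)/(2h₁h₄)) arctan(h₁P/(h²+h₄R₄(P)))
      − (P/R₁(P)) ln((R₁(P)+R₄(P))/h₄) + P/(2(R₄(P)+h₄))]. -/
theorem stmt_15 (h1 h4 P : ℝ) (hh1 : 0 < h1) (hh4 : 0 < h4) (hP : 0 < P) :
    (∫ p in (0:ℝ)..P,
        (1 / (p ^ 2 + h1 ^ 2)) *
          (1 / (Real.sqrt (p ^ 2 + (h1 ^ 2 + h4 ^ 2)) + h4)
            - (1 / Real.sqrt (p ^ 2 + h1 ^ 2)) *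
                Real.log ((Real.sqrt (p ^ 2 + h1 ^ 2)
                    + Real.sqrt (p ^ 2 + (h1 ^ 2 + h4 ^ 2))) / h4)
            + 1 / (2 * h4)))
      = (1 / h1 ^ 2) *
          (Real.log ((P + Real.sqrt (P ^ 2 + (h1 ^ 2 + h4 ^ 2)))
                / Real.sqrt (h1 ^ 2 + h4 ^ 2))
            + ((h1 ^ 2 - h4 ^ 2) / (2 * h1 * h4)) *
                Real.arctan (h1 * P
                  / ((h1 ^ 2 + h4 ^ 2) + h4 * Real.sqrt (P ^ 2 + (h1 ^ 2 + h4 ^ 2))))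
            - (P / Real.sqrt (P ^ 2 + h1 ^ 2)) *
                Real.log ((Real.sqrt (P ^ 2 + h1 ^ 2)
                    + Real.sqrt (P ^ 2 + (h1 ^ 2 + h4 ^ 2))) / h4)
            + P / (2 * (Real.sqrt (P ^ 2 + (h1 ^ 2 + h4 ^ 2)) + h4))) := by
  have hcont : Continuous (fun p : ℝ =>
        (1 / (p ^ 2 + h1 ^ 2)) *
          (1 / (Real.sqrt (p ^ 2 + (h1 ^ 2 + h4 ^ 2)) + h4)
            - (1 / Real.sqrt (p ^ 2 + h1 ^ 2)) *
                Real.log ((Real.sqrt (p ^ 2 + h1 ^ 2)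
                    + Real.sqrt (p ^ 2 + (h1 ^ 2 + h4 ^ 2))) / h4)
            + 1 / (2 * h4))) := by
    have hs1 : Continuous fun p : ℝ => Real.sqrt (p^2 + h1^2) :=
      Real.continuous_sqrt.comp (by continuity)
    have hs4 : Continuous fun p : ℝ => Real.sqrt (p^2 + (h1^2+h4^2)) :=
      Real.continuous_sqrt.comp (by continuity)
    have hs1p : ∀ p : ℝ, 0 < Real.sqrt (p^2 + h1^2) :=
      fun p => Real.sqrt_pos.mpr (by positivity)
    have hs4p : ∀ p : ℝ, 0 < Real.sqrt (p^2 + (h1^2+h4^2)) :=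
      fun p => Real.sqrt_pos.mpr (by positivity)
    apply Continuous.mul
    · exact continuous_const.div (by continuity) (fun p => by positivity)
    · apply Continuous.add
      · apply Continuous.sub
        · exact continuous_const.div (hs4.add continuous_const) (fun p => by positivity)
        · apply Continuous.mul
          · exact continuous_const.div hs1 (fun p => (hs1p p).ne')
          · apply Continuous.log
            · exact (hs1.add hs4).div_const h4
            · intro p
              have := hs1p p; have := hs4p p
              positivity
      · exact continuous_const
  have hftc := intervalIntegral.integral_eq_sub_of_hasDerivAt
    (f := fun p : ℝ =>
      (1/h1^2) * (Real.log (p + Real.sqrt (p^2 + (h1^2+h4^2))) - Real.log (Real.sqrt (h1^2+h4^2))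
        + ((h1^2-h4^2)/(2*h1*h4)) * Real.arctan (h1*p/((h1^2+h4^2) + h4 * Real.sqrt (p^2+(h1^2+h4^2))))
        - (p / Real.sqrt (p^2+h1^2)) * (Real.log (Real.sqrt (p^2+h1^2) + Real.sqrt (p^2+(h1^2+h4^2))) - Real.log h4)
        + p / (2*(Real.sqrt (p^2+(h1^2+h4^2)) + h4))))
    (fun x _ => hasDerivAt_F h1 h4 hh1 hh4 x)
    (hcont.intervalIntegrable 0 P)
  rw [hftc]
  have h2p : (0:ℝ) < h1^2 + h4^2 := by positivity
  have hs1P : (0:ℝ) < Real.sqrt (P^2 + h1^2) := Real.sqrt_pos.mpr (by positivity)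
  have hs4P : (0:ℝ) < Real.sqrt (P^2 + (h1^2+h4^2)) := Real.sqrt_pos.mpr (by positivity)
  have hsh : (0:ℝ) < Real.sqrt (h1^2 + h4^2) := Real.sqrt_pos.mpr h2p
  have e0 : ((0:ℝ)^2 : ℝ) = 0 := by norm_num
  have hlog1 : Real.log ((P + Real.sqrt (P^2 + (h1^2+h4^2))) / Real.sqrt (h1^2+h4^2))
      = Real.log (P + Real.sqrt (P^2 + (h1^2+h4^2))) - Real.log (Real.sqrt (h1^2+h4^2)) :=
    Real.log_div (by positivity) hsh.ne'
  have hlog2 : Real.log ((Real.sqrt (P^2+h1^2) + Real.sqrt (P^2+(h1^2+h4^2))) / h4)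
      = Real.log (Real.sqrt (P^2+h1^2) + Real.sqrt (P^2+(h1^2+h4^2))) - Real.log h4 :=
    Real.log_div (by positivity) hh4.ne'
  simp only [e0, zero_add, mul_zero, zero_div, Real.arctan_zero, zero_mul, sub_self]
  rw [hlog1, hlog2]
  ring
end

section
/- Let a, c ∈ ℝ³ be linearly independent vectors and set b = −a − c, l1 = ‖a‖, l2 = ‖b‖, l3 = ‖c‖, and p = (l1 + l2 + l3)/2. Then ∫₀¹ ds / ‖s·a + c‖ = (1/l1) · ln( p / (p − l1) ). -/
/-- Terminal 1D integral (sa18) of the self-action single-layer evaluation: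
for edge vectors a, b = −a−c, c of a nondegenerate triangle with side lengths
l₁ = ‖a‖, l₂ = ‖b‖, l₃ = ‖c‖ and half-perimeter p,
∫₀¹ ds/‖s·a + c‖ = (1/l₁) ln(p/(p−l₁)). -/
theorem stmt_16 (a c : EuclideanSpace ℝ (Fin 3))
    (hli : LinearIndependent ℝ ![a, c]) :
    (∫ s in (0:ℝ)..1, 1 / ‖s • a + c‖)
      = (1 / ‖a‖) *
          Real.log (((‖a‖ + ‖-a - c‖ + ‖c‖) / 2)
            / ((‖a‖ + ‖-a - c‖ + ‖c‖) / 2 - ‖a‖)) := by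
  rw [linearIndependent_fin2] at hli
  obtain ⟨hc, hac⟩ := hli
  simp only [Matrix.cons_val_one, Matrix.head_cons, Matrix.cons_val_zero] at hc hac
  set l1 : ℝ := ‖a‖ with hl1def
  set l3 : ℝ := ‖c‖ with hl3def
  set B : ℝ := inner ℝ a c with hBdef
  have ha : a ≠ 0 := fun h => hac 0 (by simp [h])
  have hl1 : 0 < l1 := norm_pos_iff.mpr ha
  have hl3 : 0 < l3 := norm_pos_iff.mpr hc
  have hne : ∀ s : ℝ, s • a + c ≠ 0 := by
    intro s h
    rcases eq_or_ne s 0 with rfl | hs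
    · simp only [zero_smul, zero_add] at h; exact hc h
    · apply hac (-(1/s))
      have hca : c = (-s) • a := by
        have := h
        rw [add_eq_zero_iff_eq_neg] at this
        rw [neg_smul, this, neg_neg]
      rw [hca, smul_smul]
      rw [show -(1/s) * -s = 1 by field_simp]
      rw [one_smul]
  have hpos : ∀ s : ℝ, 0 < ‖s • a + c‖ := fun s => norm_pos_iff.mpr (hne s)
  have hQ : ∀ s : ℝ, ‖s • a + c‖ ^ 2 = l1 ^ 2 * s ^ 2 + 2 * B * s + l3 ^ 2 := by
    intro s
    rw [@norm_add_sq_real]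
    rw [norm_smul, real_inner_smul_left]
    simp [abs_mul, mul_pow, ← hBdef, ← hl1def, ← hl3def, sq_abs]
    ring
  have hdisc : B ^ 2 < l1 ^ 2 * l3 ^ 2 := by
    have h0 := hpos (-(B / l1 ^ 2))
    have h1 := hQ (-(B / l1 ^ 2))
    have h2 : 0 < ‖(-(B / l1 ^ 2)) • a + c‖ ^ 2 := by positivity
    rw [h1] at h2
    have key : l1 ^ 2 * (-(B / l1 ^ 2)) ^ 2 + 2 * B * -(B / l1 ^ 2) + l3 ^ 2
        = (l1 ^ 2 * l3 ^ 2 - B ^ 2) / l1 ^ 2 := by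
      field_simp
      ring
    rw [key] at h2
    have := (lt_div_iff₀ (by positivity : (0:ℝ) < l1 ^ 2)).mp h2
    linarith
  -- positivity of the log argument
  have hden : ∀ s : ℝ, 0 < l1 * ‖s • a + c‖ + (l1 ^ 2 * s + B) := by
    intro s
    have h1 : (l1 * ‖s • a + c‖) ^ 2 - (l1 ^ 2 * s + B) ^ 2 = l1 ^ 2 * l3 ^ 2 - B ^ 2 := by
      rw [mul_pow, hQ]; ring
    nlinarith [hpos s, mul_pos hl1 (hpos s)]
  -- derivative of the norm
  have hg : ∀ s : ℝ, HasDerivAt (fun t : ℝ => ‖t • a + c‖) ((l1 ^ 2 * s + B) / ‖s • a + c‖) s := by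
    intro s
    have hpoly : HasDerivAt (fun t : ℝ => l1 ^ 2 * t ^ 2 + 2 * B * t + l3 ^ 2)
        (2 * l1 ^ 2 * s + 2 * B) s := by
      have h1 : HasDerivAt (fun t : ℝ => t) 1 s := hasDerivAt_id s
      have := (((h1.pow 2).const_mul (l1 ^ 2)).add ((h1.const_mul (2 * B)))).add_const (l3 ^ 2)
      refine this.congr_deriv ?_
      ring
    have hQs : l1 ^ 2 * s ^ 2 + 2 * B * s + l3 ^ 2 ≠ 0 := by
      rw [← hQ]; exact ne_of_gt (pow_pos (hpos s) 2)
    have := (Real.hasDerivAt_sqrt hQs).comp s hpoly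
    have heq : (fun t : ℝ => ‖t • a + c‖) =
        fun t : ℝ => Real.sqrt (l1 ^ 2 * t ^ 2 + 2 * B * t + l3 ^ 2) := by
      funext t
      rw [← hQ, Real.sqrt_sq (hpos t).le]
    rw [heq]
    refine this.congr_deriv ?_
    rw [← hQ, Real.sqrt_sq (hpos s).le]
    field_simp
  -- antiderivative
  set F : ℝ → ℝ := fun s => (1 / l1) * Real.log (l1 * ‖s • a + c‖ + (l1 ^ 2 * s + B)) with hF
  have hF' : ∀ s : ℝ, HasDerivAt F (1 / ‖s • a + c‖) s := by
    intro s
    have h1 : HasDerivAt (fun t : ℝ => l1 * ‖t • a + c‖ + (l1 ^ 2 * t + B))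
        (l1 * ((l1 ^ 2 * s + B) / ‖s • a + c‖) + l1 ^ 2) s := by
      have h2 : HasDerivAt (fun t : ℝ => l1 ^ 2 * t + B) (l1 ^ 2) s := by
        have := ((hasDerivAt_id s).const_mul (l1 ^ 2)).add_const B
        simpa using this
      exact (((hg s).const_mul l1)).add h2
    have h3 := (h1.log (ne_of_gt (hden s))).const_mul (1 / l1)
    refine h3.congr_deriv ?_
    have hn := hpos s
    have hd := hden s
    field_simp
    ring
  have hint : IntervalIntegrable (fun s : ℝ => 1 / ‖s • a + c‖) MeasureTheory.volume 0 1 := by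
    apply Continuous.intervalIntegrable
    apply continuous_const.div
    · exact ((continuous_id.smul continuous_const).add continuous_const).norm
    · exact fun s => ne_of_gt (hpos s)
  have hI := intervalIntegral.integral_eq_sub_of_hasDerivAt
    (fun s _ => hF' s) hint
  rw [hI]
  -- now compute F 1 - F 0
  have hb : ‖-a - c‖ = ‖(1:ℝ) • a + c‖ := by
    rw [one_smul, show -a - c = -(a + c) by abel, norm_neg]
  set l2 : ℝ := ‖-a - c‖ with hl2def
  have hl2 : 0 < l2 := by rw [hb]; exact hpos 1
  have hl2sq : l2 ^ 2 = l1 ^ 2 + 2 * B + l3 ^ 2 := by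
    rw [hb, hQ]; ring
  have hN1 : l1 * ‖(1:ℝ) • a + c‖ + (l1 ^ 2 * 1 + B) = l1 * l2 + l1 ^ 2 + B := by
    rw [← hb]; ring
  have hN0 : l1 * ‖(0:ℝ) • a + c‖ + (l1 ^ 2 * 0 + B) = l1 * l3 + B := by
    simp [← hl3def]
  have hD1 : (0:ℝ) < l1 * l2 + l1 ^ 2 + B := by rw [← hN1]; exact hden 1
  have hD0 : (0:ℝ) < l1 * l3 + B := by rw [← hN0]; exact hden 0
  have htri : l1 < l2 + l3 := by nlinarith [hl2sq, hdisc, hl2, hl3, hl1]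
  rw [hF]
  simp only
  rw [hN1, hN0, ← mul_sub, ← Real.log_div (ne_of_gt hD1) (ne_of_gt hD0)]
  congr 2
  have hp : (l1 + l2 + l3) / 2 - l1 = (l2 + l3 - l1) / 2 := by ring
  have hpl : (0:ℝ) < (l1 + l2 + l3) / 2 - l1 := by rw [hp]; linarith
  rw [div_eq_div_iff (ne_of_gt hD0) (ne_of_gt hpl)]
  nlinarith [hl2sq]
end
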